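/- The linear Toda bracket π₁ and the quadratic Toda bracket π₂ are compatible: π₁ + π₂ satisfies the Jacobi identity. -/

import Mathlib

/-- Index set for Toda variables `(a_1, …, a_{N-1}, b_1, …, b_N)` (0-based). -/
abbrev TodaIdx (N : ℕ) := Fin (N - 1) ⊕ Fin N

/-- The value of the `a`-variable with (0-based) index `m`, zero out of range. -/
noncomputable def av {N : ℕ} (x : TodaIdx N → ℝ) (m : ℕ) : ℝ :=
  if h : m < N - 1 then x (.inl ⟨m, h⟩) else 0

/-- The value of the `b`-variable with (0-based) index `m`, zero out of range. -/
noncomputable def bv {N : ℕ} (x : TodaIdx N → ℝ) (m : ℕ) : ℝ :=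
  if h : m < N then x (.inr ⟨m, h⟩) else 0

/-- Structure matrix of the linear Toda bracket `π₁`:
`{a_i, b_i} = -a_i`, `{a_i, b_{i+1}} = a_i`. -/
noncomputable def linP (N : ℕ) : TodaIdx N → TodaIdx N → (TodaIdx N → ℝ) → ℝ
  | .inl i, .inr j, x =>
      if (j : ℕ) = (i : ℕ) then -(x (.inl i))
      else if (j : ℕ) = (i : ℕ) + 1 then x (.inl i) else 0
  | .inr j, .inl i, x =>
      -(if (j : ℕ) = (i : ℕ) then -(x (.inl i))
        else if (j : ℕ) = (i : ℕ) + 1 then x (.inl i) else 0)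
  | _, _, _ => 0

/-- Structure matrix of the quadratic Toda bracket `π₂`:
`{a_i, a_{i+1}} = ½ a_i a_{i+1}`, `{a_i, b_i} = -a_i b_i`,
`{a_i, b_{i+1}} = a_i b_{i+1}`, `{b_i, b_{i+1}} = 2 a_i²`. -/
noncomputable def quadP (N : ℕ) : TodaIdx N → TodaIdx N → (TodaIdx N → ℝ) → ℝ
  | .inl i, .inl j, x =>
      if (j : ℕ) = (i : ℕ) + 1 then (1/2) * av x i * av x j
      else if (i : ℕ) = (j : ℕ) + 1 then -((1/2) * av x j * av x i) else 0
  | .inl i, .inr j, x =>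
      if (j : ℕ) = (i : ℕ) then -(av x i * bv x j)
      else if (j : ℕ) = (i : ℕ) + 1 then av x i * bv x j else 0
  | .inr j, .inl i, x =>
      -(if (j : ℕ) = (i : ℕ) then -(av x i * bv x j)
        else if (j : ℕ) = (i : ℕ) + 1 then av x i * bv x j else 0)
  | .inr i, .inr j, x =>
      if (j : ℕ) = (i : ℕ) + 1 then 2 * (av x i)^2
      else if (i : ℕ) = (j : ℕ) + 1 then -(2 * (av x j)^2) else 0

/-- Structure matrix of the sum bracket `π₁ + π₂`. -/
noncomputable def sumP (N : ℕ) (u v : TodaIdx N) (x : TodaIdx N → ℝ) : ℝ :=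
  linP N u v x + quadP N u v x

/-- Partial derivative in the `s`-th coordinate direction. -/
noncomputable def pd {N : ℕ} (f : (TodaIdx N → ℝ) → ℝ) (s : TodaIdx N) (x : TodaIdx N → ℝ) : ℝ :=
  fderiv ℝ f x (Pi.single s 1)

section Toolkit
variable {N : ℕ}

/-- delta for a-direction -/
noncomputable def asel (N : ℕ) : TodaIdx N → ℕ → ℝ
  | .inl i, m => if (i : ℕ) = m then 1 else 0
  | .inr _, _ => 0

/-- delta for b-direction -/
noncomputable def bsel (N : ℕ) : TodaIdx N → ℕ → ℝ
  | .inr i, m => if (i : ℕ) = m then 1 else 0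
  | .inl _, _ => 0

lemma av_single (s : TodaIdx N) (m : ℕ) : av (Pi.single s (1:ℝ)) m = asel N s m := by
  unfold av
  by_cases h : m < N - 1
  · rw [dif_pos h, Pi.single_apply]
    cases s with
    | inl i =>
      simp only [asel, Sum.inl.injEq]
      by_cases hi : (i : ℕ) = m
      · rw [if_pos (by exact Fin.ext hi.symm), if_pos hi]
      · rw [if_neg (by intro e; exact hi (by rw [← e])), if_neg hi]
    | inr i => simp [asel]
  · rw [dif_neg h]
    cases s with
    | inl i => simp only [asel]; rw [if_neg (by omega)]
    | inr i => simp [asel]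

lemma bv_single (s : TodaIdx N) (m : ℕ) : bv (Pi.single s (1:ℝ)) m = bsel N s m := by
  unfold bv
  by_cases h : m < N
  · rw [dif_pos h, Pi.single_apply]
    cases s with
    | inr i =>
      simp only [bsel, Sum.inr.injEq]
      by_cases hi : (i : ℕ) = m
      · rw [if_pos (by exact Fin.ext hi.symm), if_pos hi]
      · rw [if_neg (by intro e; exact hi (by rw [← e])), if_neg hi]
    | inl i => simp [bsel]
  · rw [dif_neg h]
    cases s with
    | inr i => simp only [bsel]; rw [if_neg (by omega)]
    | inl i => simp [bsel]

noncomputable def avL (N : ℕ) (m : ℕ) : (TodaIdx N → ℝ) →L[ℝ] ℝ :=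
  if h : m < N - 1 then ContinuousLinearMap.proj (R := ℝ) (φ := fun _ : TodaIdx N => ℝ) (.inl ⟨m, h⟩) else 0

noncomputable def bvL (N : ℕ) (m : ℕ) : (TodaIdx N → ℝ) →L[ℝ] ℝ :=
  if h : m < N then ContinuousLinearMap.proj (R := ℝ) (φ := fun _ : TodaIdx N => ℝ) (.inr ⟨m, h⟩) else 0

lemma avL_apply (m : ℕ) (y : TodaIdx N → ℝ) : avL N m y = av y m := by
  unfold avL av; split <;> simp

lemma bvL_apply (m : ℕ) (y : TodaIdx N → ℝ) : bvL N m y = bv y m := by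
  unfold bvL bv; split <;> simp

lemma hasFD_av (m : ℕ) (x : TodaIdx N → ℝ) :
    HasFDerivAt (fun y : TodaIdx N → ℝ => av y m) (avL N m) x := by
  unfold av avL
  by_cases h : m < N - 1
  · simp only [dif_pos h]
    exact (ContinuousLinearMap.proj (R := ℝ) (φ := fun _ : TodaIdx N => ℝ) (.inl ⟨m, h⟩)).hasFDerivAt
  · simp only [dif_neg h]
    exact hasFDerivAt_const 0 x

lemma hasFD_bv (m : ℕ) (x : TodaIdx N → ℝ) :
    HasFDerivAt (fun y : TodaIdx N → ℝ => bv y m) (bvL N m) x := by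
  unfold bv bvL
  by_cases h : m < N
  · simp only [dif_pos h]
    exact (ContinuousLinearMap.proj (R := ℝ) (φ := fun _ : TodaIdx N => ℝ) (.inr ⟨m, h⟩)).hasFDerivAt
  · simp only [dif_neg h]
    exact hasFDerivAt_const 0 x

lemma pd_apply {f : (TodaIdx N → ℝ) → ℝ} {L : (TodaIdx N → ℝ) →L[ℝ] ℝ} {x : TodaIdx N → ℝ}
    (h : HasFDerivAt f L x) (s : TodaIdx N) : pd f s x = L (Pi.single s 1) := by
  rw [pd, h.fderiv]

end Toolkit

section PdShapes
variable {N : ℕ} (s : TodaIdx N) (x : TodaIdx N → ℝ) (i j : ℕ)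

lemma pd_sh0 : pd (fun _ : TodaIdx N → ℝ => (0:ℝ)) s x = 0 := by
  rw [pd_apply (hasFDerivAt_const (0:ℝ) x)]; simp

lemma pd_sh1 : pd (fun y : TodaIdx N → ℝ => (1/2 : ℝ) * av y i * av y j) s x
    = (1/2) * (asel N s i * av x j + av x i * asel N s j) := by
  rw [pd_apply (f := fun y : TodaIdx N → ℝ => (1/2 : ℝ) * av y i * av y j) (((hasFD_av i x).const_mul (1/2 : ℝ)).mul (hasFD_av j x))]
  simp only [ContinuousLinearMap.add_apply, ContinuousLinearMap.coe_smul', Pi.smul_apply,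
    smul_eq_mul, avL_apply, av_single]
  ring

lemma pd_sh2 : pd (fun y : TodaIdx N → ℝ => -((1/2 : ℝ) * av y j * av y i)) s x
    = -((1/2) * (asel N s j * av x i + av x j * asel N s i)) := by
  rw [pd_apply (f := fun y : TodaIdx N → ℝ => -((1/2 : ℝ) * av y j * av y i)) ((((hasFD_av j x).const_mul (1/2 : ℝ)).mul (hasFD_av i x)).neg)]
  simp only [ContinuousLinearMap.neg_apply, ContinuousLinearMap.add_apply,
    ContinuousLinearMap.coe_smul', Pi.smul_apply, smul_eq_mul, avL_apply, av_single]
  ring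

lemma pd_sh3 : pd (fun y : TodaIdx N → ℝ => -(av y i) + -(av y i * bv y j)) s x
    = -(asel N s i) + -(asel N s i * bv x j + av x i * bsel N s j) := by
  rw [pd_apply (f := fun y : TodaIdx N → ℝ => -(av y i) + -(av y i * bv y j)) (((hasFD_av i x).neg).add (((hasFD_av i x).mul (hasFD_bv j x)).neg))]
  simp only [ContinuousLinearMap.add_apply, ContinuousLinearMap.neg_apply,
    ContinuousLinearMap.coe_smul', Pi.smul_apply, smul_eq_mul, avL_apply, bvL_apply,
    av_single, bv_single]
  ring

lemma pd_sh4 : pd (fun y : TodaIdx N → ℝ => av y i + av y i * bv y j) s x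
    = asel N s i + (asel N s i * bv x j + av x i * bsel N s j) := by
  rw [pd_apply (f := fun y : TodaIdx N → ℝ => av y i + av y i * bv y j) ((hasFD_av i x).add ((hasFD_av i x).mul (hasFD_bv j x)))]
  simp only [ContinuousLinearMap.add_apply, ContinuousLinearMap.coe_smul', Pi.smul_apply,
    smul_eq_mul, avL_apply, bvL_apply, av_single, bv_single]
  ring

lemma pd_sh5 : pd (fun y : TodaIdx N → ℝ => 2 * (av y i * av y i)) s x
    = 4 * av x i * asel N s i := by
  rw [pd_apply (f := fun y : TodaIdx N → ℝ => 2 * (av y i * av y i)) (((hasFD_av i x).mul (hasFD_av i x)).const_mul (2:ℝ))]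
  simp only [ContinuousLinearMap.coe_smul', ContinuousLinearMap.add_apply, Pi.smul_apply, smul_eq_mul, avL_apply, av_single]
  ring

lemma pd_sh6 : pd (fun y : TodaIdx N → ℝ => -(2 * (av y j * av y j))) s x
    = -(4 * av x j * asel N s j) := by
  rw [pd_apply (f := fun y : TodaIdx N → ℝ => -(2 * (av y j * av y j))) ((((hasFD_av j x).mul (hasFD_av j x)).const_mul (2:ℝ)).neg)]
  simp only [ContinuousLinearMap.neg_apply, ContinuousLinearMap.add_apply, ContinuousLinearMap.coe_smul', Pi.smul_apply,
    smul_eq_mul, avL_apply, av_single]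
  ring

end PdShapes

section Contraction
variable {N : ℕ}

lemma sum_asel (g : TodaIdx N → ℝ) (m : ℕ) :
    ∑ s : TodaIdx N, g s * asel N s m = if h : m < N - 1 then g (.inl ⟨m, h⟩) else 0 := by
  rw [Fintype.sum_sum_type]
  have h2 : ∀ i : Fin N, g (.inr i) * asel N (.inr i) m = 0 := by
    intro i; simp [asel]
  rw [Finset.sum_congr rfl (fun i _ => h2 i), Finset.sum_const_zero, add_zero]
  by_cases h : m < N - 1
  · rw [dif_pos h]
    have h3 : ∀ i : Fin (N-1), g (.inl i) * asel N (.inl i) m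
        = if i = ⟨m, h⟩ then g (.inl i) else 0 := by
      intro i
      simp only [asel]
      by_cases hi : (i : ℕ) = m
      · rw [if_pos hi, if_pos (Fin.ext hi), mul_one]
      · rw [if_neg hi, if_neg (fun e => hi (by rw [e])), mul_zero]
    rw [Finset.sum_congr rfl (fun i _ => h3 i), Finset.sum_ite_eq' Finset.univ ⟨m, h⟩ (fun i => g (.inl i))]
    simp
  · rw [dif_neg h]
    apply Finset.sum_eq_zero
    intro i _
    simp only [asel]
    rw [if_neg (by omega), mul_zero]

lemma sum_bsel (g : TodaIdx N → ℝ) (m : ℕ) :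
    ∑ s : TodaIdx N, g s * bsel N s m = if h : m < N then g (.inr ⟨m, h⟩) else 0 := by
  rw [Fintype.sum_sum_type]
  have h2 : ∀ i : Fin (N-1), g (.inl i) * bsel N (.inl i) m = 0 := by
    intro i; simp [bsel]
  rw [Finset.sum_congr rfl (fun i _ => h2 i), Finset.sum_const_zero, zero_add]
  by_cases h : m < N
  · rw [dif_pos h]
    have h3 : ∀ i : Fin N, g (.inr i) * bsel N (.inr i) m
        = if i = ⟨m, h⟩ then g (.inr i) else 0 := by
      intro i
      simp only [bsel]
      by_cases hi : (i : ℕ) = m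
      · rw [if_pos hi, if_pos (Fin.ext hi), mul_one]
      · rw [if_neg hi, if_neg (fun e => hi (by rw [e])), mul_zero]
    rw [Finset.sum_congr rfl (fun i _ => h3 i), Finset.sum_ite_eq' Finset.univ ⟨m, h⟩ (fun i => g (.inr i))]
    simp
  · rw [dif_neg h]
    apply Finset.sum_eq_zero
    intro i _
    simp only [bsel]
    rw [if_neg (by omega), mul_zero]

end Contraction

/-- Nat-indexed closed form of `sumP (a_m) u`. -/
noncomputable def QA (A B : ℕ → ℝ) : ℕ ⊕ ℕ → ℕ → ℝ
  | .inl k, m => if k = m + 1 then (1/2) * A m * A k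
      else if m = k + 1 then -((1/2) * A k * A m) else 0
  | .inr k, m => if k = m then -(A m) - A m * B k
      else if k = m + 1 then A m + A m * B k else 0

/-- Nat-indexed closed form of `sumP (b_m) u`. -/
noncomputable def QB (A B : ℕ → ℝ) : ℕ ⊕ ℕ → ℕ → ℝ
  | .inl k, m => -(if m = k then -(A k) - A k * B m
      else if m = k + 1 then A k + A k * B m else 0)
  | .inr k, m => if k = m + 1 then 2 * (A m)^2
      else if m = k + 1 then -(2 * (A k)^2) else 0

/-- Nat-indexed closed form of `∑ s, sumP s u * pd (sumP v w) s`. -/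
noncomputable def SC (A B : ℕ → ℝ) : ℕ ⊕ ℕ → ℕ ⊕ ℕ → ℕ ⊕ ℕ → ℝ
  | u, .inl i, .inl j =>
      if j = i + 1 then (1/2) * (QA A B u i * A j + A i * QA A B u j)
      else if i = j + 1 then -((1/2) * (QA A B u j * A i + A j * QA A B u i)) else 0
  | u, .inl i, .inr j =>
      if j = i then -(QA A B u i) - (QA A B u i * B j + A i * QB A B u j)
      else if j = i + 1 then QA A B u i + (QA A B u i * B j + A i * QB A B u j) else 0
  | u, .inr j, .inl i =>
      -(if j = i then -(QA A B u i) - (QA A B u i * B j + A i * QB A B u j)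
        else if j = i + 1 then QA A B u i + (QA A B u i * B j + A i * QB A B u j) else 0)
  | u, .inr i, .inr j =>
      if j = i + 1 then 4 * A i * QA A B u i
      else if i = j + 1 then -(4 * A j * QA A B u j) else 0

/-- map actual indices to nat-tagged indices -/
def m2 {N : ℕ} : TodaIdx N → ℕ ⊕ ℕ
  | .inl i => .inl (i : ℕ)
  | .inr i => .inr (i : ℕ)

section Bridge
variable {N : ℕ} (x : TodaIdx N → ℝ)

lemma av_fin (i : Fin (N-1)) : x (.inl i) = av x (i : ℕ) := by
  unfold av
  rw [dif_pos i.isLt]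

lemma bv_fin (i : Fin N) : x (.inr i) = bv x (i : ℕ) := by
  unfold bv
  rw [dif_pos i.isLt]

lemma av_oor {m : ℕ} (h : ¬ m < N - 1) : av x m = 0 := by
  unfold av; rw [dif_neg h]

lemma QA_eq (u : TodaIdx N) (m : ℕ) :
    (if h : m < N - 1 then sumP N (.inl ⟨m, h⟩) u x else 0) = QA (av x) (bv x) (m2 u) m := by
  by_cases h : m < N - 1
  · rw [dif_pos h]
    cases u with
    | inl k =>
      simp only [sumP, linP, quadP, QA, m2, zero_add]
      try split_ifs <;> simp_all [av]
    | inr k =>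
      simp only [sumP, linP, quadP, QA, m2]
      have hx : x (.inl ⟨m, h⟩) = av x m := by unfold av; rw [dif_pos h]
      split_ifs <;> simp_all [av] <;> ring
  · rw [dif_neg h]
    have h0 : av x m = 0 := av_oor x h
    cases u with
    | inl k =>
      simp only [QA, m2, h0]
      split_ifs <;> ring
    | inr k =>
      simp only [QA, m2, h0]
      split_ifs <;> ring

lemma QB_eq (u : TodaIdx N) (m : ℕ) :
    (if h : m < N then sumP N (.inr ⟨m, h⟩) u x else 0) = QB (av x) (bv x) (m2 u) m := by
  by_cases h : m < N
  · rw [dif_pos h]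
    cases u with
    | inl k =>
      simp only [sumP, linP, quadP, QB, m2]
      have hx : x (.inl k) = av x (k : ℕ) := av_fin x k
      have hb : bv x m = x (.inr ⟨m, h⟩) := by unfold bv; rw [dif_pos h]
      split_ifs <;> simp_all [av, bv] <;> ring
    | inr k =>
      have hb : bv x m = x (.inr ⟨m, h⟩) := by unfold bv; rw [dif_pos h]
      simp only [sumP, linP, quadP, QB, m2, zero_add]
      try split_ifs <;> simp_all [av, bv]
  · rw [dif_neg h]
    cases u with
    | inl k =>
      have hk := k.isLt
      simp only [QB, m2]
      rw [if_neg (by omega), if_neg (by omega)]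
      ring
    | inr k =>
      have hk := k.isLt
      simp only [QB, m2]
      rw [if_neg (by omega)]
      by_cases h2 : m = (k : ℕ) + 1
      · rw [if_pos h2]
        have : av x (k : ℕ) = 0 := av_oor x (by omega)
        rw [this]; ring
      · rw [if_neg h2]

end Bridge

section ContractLemmas
variable {N : ℕ} (x : TodaIdx N → ℝ) (u : TodaIdx N)

lemma contract_ll (i j : Fin (N-1)) :
    ∑ s : TodaIdx N, sumP N s u x * pd (sumP N (.inl i) (.inl j)) s x
      = SC (av x) (bv x) (m2 u) (.inl (i:ℕ)) (.inl (j:ℕ)) := by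
  simp only [SC]
  by_cases hc1 : (j:ℕ) = (i:ℕ) + 1
  · have hf : sumP N (.inl i) (.inl j) = fun y => (1/2:ℝ) * av y (i:ℕ) * av y (j:ℕ) := by
      funext y; simp only [sumP, linP, quadP, if_pos hc1, zero_add]
    rw [if_pos hc1]
    simp only [hf, pd_sh1]
    have e : ∀ s : TodaIdx N, sumP N s u x * ((1/2) * (asel N s (i:ℕ) * av x (j:ℕ) + av x (i:ℕ) * asel N s (j:ℕ)))
        = ((1/2) * av x (j:ℕ)) * (sumP N s u x * asel N s (i:ℕ))
          + ((1/2) * av x (i:ℕ)) * (sumP N s u x * asel N s (j:ℕ)) := fun s => by ring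
    rw [Finset.sum_congr rfl (fun s _ => e s), Finset.sum_add_distrib,
      ← Finset.mul_sum, ← Finset.mul_sum, sum_asel (fun s => sumP N s u x),
      sum_asel (fun s => sumP N s u x)]
    rw [QA_eq x u (i:ℕ), QA_eq x u (j:ℕ)]
    ring
  · rw [if_neg hc1]
    by_cases hc2 : (i:ℕ) = (j:ℕ) + 1
    · have hf : sumP N (.inl i) (.inl j) = fun y => -((1/2:ℝ) * av y (j:ℕ) * av y (i:ℕ)) := by
        funext y; simp only [sumP, linP, quadP, if_neg hc1, if_pos hc2, zero_add]
      rw [if_pos hc2]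
      simp only [hf, pd_sh2]
      have e : ∀ s : TodaIdx N, sumP N s u x * (-((1/2) * (asel N s (j:ℕ) * av x (i:ℕ) + av x (j:ℕ) * asel N s (i:ℕ))))
          = (-((1/2) * av x (i:ℕ))) * (sumP N s u x * asel N s (j:ℕ))
            + (-((1/2) * av x (j:ℕ))) * (sumP N s u x * asel N s (i:ℕ)) := fun s => by ring
      rw [Finset.sum_congr rfl (fun s _ => e s), Finset.sum_add_distrib,
        ← Finset.mul_sum, ← Finset.mul_sum, sum_asel (fun s => sumP N s u x),
        sum_asel (fun s => sumP N s u x)]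
      rw [QA_eq x u (j:ℕ), QA_eq x u (i:ℕ)]
      ring
    · have hf : sumP N (.inl i) (.inl j) = fun _ => (0:ℝ) := by
        funext y; simp only [sumP, linP, quadP, if_neg hc1, if_neg hc2, zero_add]
      rw [if_neg hc2]
      simp only [hf, pd_sh0, mul_zero]
      exact Finset.sum_const_zero

lemma contract_lr (i : Fin (N-1)) (j : Fin N) :
    ∑ s : TodaIdx N, sumP N s u x * pd (sumP N (.inl i) (.inr j)) s x
      = SC (av x) (bv x) (m2 u) (.inl (i:ℕ)) (.inr (j:ℕ)) := by
  simp only [SC]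
  by_cases hc1 : (j:ℕ) = (i:ℕ)
  · have hf : sumP N (.inl i) (.inr j) = fun y => -(av y (i:ℕ)) + -(av y (i:ℕ) * bv y (j:ℕ)) := by
      funext y; simp only [sumP, linP, quadP, if_pos hc1]; rw [av_fin y i]
    rw [if_pos hc1]
    simp only [hf, pd_sh3]
    have e : ∀ s : TodaIdx N, sumP N s u x * (-(asel N s (i:ℕ)) + -(asel N s (i:ℕ) * bv x (j:ℕ) + av x (i:ℕ) * bsel N s (j:ℕ)))
        = (-1 - bv x (j:ℕ)) * (sumP N s u x * asel N s (i:ℕ))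
          + (-(av x (i:ℕ))) * (sumP N s u x * bsel N s (j:ℕ)) := fun s => by ring
    rw [Finset.sum_congr rfl (fun s _ => e s), Finset.sum_add_distrib,
      ← Finset.mul_sum, ← Finset.mul_sum, sum_asel (fun s => sumP N s u x),
      sum_bsel (fun s => sumP N s u x)]
    rw [QA_eq x u (i:ℕ), QB_eq x u (j:ℕ)]
    ring
  · rw [if_neg hc1]
    by_cases hc2 : (j:ℕ) = (i:ℕ) + 1
    · have hf : sumP N (.inl i) (.inr j) = fun y => av y (i:ℕ) + av y (i:ℕ) * bv y (j:ℕ) := by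
        funext y; simp only [sumP, linP, quadP, if_neg hc1, if_pos hc2]; rw [av_fin y i]
      rw [if_pos hc2]
      simp only [hf, pd_sh4]
      have e : ∀ s : TodaIdx N, sumP N s u x * (asel N s (i:ℕ) + (asel N s (i:ℕ) * bv x (j:ℕ) + av x (i:ℕ) * bsel N s (j:ℕ)))
          = (1 + bv x (j:ℕ)) * (sumP N s u x * asel N s (i:ℕ))
            + (av x (i:ℕ)) * (sumP N s u x * bsel N s (j:ℕ)) := fun s => by ring
      rw [Finset.sum_congr rfl (fun s _ => e s), Finset.sum_add_distrib,
        ← Finset.mul_sum, ← Finset.mul_sum, sum_asel (fun s => sumP N s u x),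
        sum_bsel (fun s => sumP N s u x)]
      rw [QA_eq x u (i:ℕ), QB_eq x u (j:ℕ)]
      ring
    · have hf : sumP N (.inl i) (.inr j) = fun _ => (0:ℝ) := by
        funext y; simp only [sumP, linP, quadP, if_neg hc1, if_neg hc2]; norm_num
      rw [if_neg hc2]
      simp only [hf, pd_sh0, mul_zero]
      exact Finset.sum_const_zero

lemma contract_rl (j : Fin N) (i : Fin (N-1)) :
    ∑ s : TodaIdx N, sumP N s u x * pd (sumP N (.inr j) (.inl i)) s x
      = SC (av x) (bv x) (m2 u) (.inr (j:ℕ)) (.inl (i:ℕ)) := by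
  simp only [SC]
  by_cases hc1 : (j:ℕ) = (i:ℕ)
  · have hf : sumP N (.inr j) (.inl i) = fun y => av y (i:ℕ) + av y (i:ℕ) * bv y (j:ℕ) := by
      funext y; simp only [sumP, linP, quadP, if_pos hc1]; rw [av_fin y i]; ring
    rw [if_pos hc1]
    simp only [hf, pd_sh4]
    have e : ∀ s : TodaIdx N, sumP N s u x * (asel N s (i:ℕ) + (asel N s (i:ℕ) * bv x (j:ℕ) + av x (i:ℕ) * bsel N s (j:ℕ)))
        = (1 + bv x (j:ℕ)) * (sumP N s u x * asel N s (i:ℕ))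
          + (av x (i:ℕ)) * (sumP N s u x * bsel N s (j:ℕ)) := fun s => by ring
    rw [Finset.sum_congr rfl (fun s _ => e s), Finset.sum_add_distrib,
      ← Finset.mul_sum, ← Finset.mul_sum, sum_asel (fun s => sumP N s u x),
      sum_bsel (fun s => sumP N s u x)]
    rw [QA_eq x u (i:ℕ), QB_eq x u (j:ℕ)]
    ring
  · rw [if_neg hc1]
    by_cases hc2 : (j:ℕ) = (i:ℕ) + 1
    · have hf : sumP N (.inr j) (.inl i) = fun y => -(av y (i:ℕ)) + -(av y (i:ℕ) * bv y (j:ℕ)) := by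
        funext y; simp only [sumP, linP, quadP, if_neg hc1, if_pos hc2]; rw [av_fin y i]
      rw [if_pos hc2]
      simp only [hf, pd_sh3]
      have e : ∀ s : TodaIdx N, sumP N s u x * (-(asel N s (i:ℕ)) + -(asel N s (i:ℕ) * bv x (j:ℕ) + av x (i:ℕ) * bsel N s (j:ℕ)))
          = (-1 - bv x (j:ℕ)) * (sumP N s u x * asel N s (i:ℕ))
            + (-(av x (i:ℕ))) * (sumP N s u x * bsel N s (j:ℕ)) := fun s => by ring
      rw [Finset.sum_congr rfl (fun s _ => e s), Finset.sum_add_distrib,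
        ← Finset.mul_sum, ← Finset.mul_sum, sum_asel (fun s => sumP N s u x),
        sum_bsel (fun s => sumP N s u x)]
      rw [QA_eq x u (i:ℕ), QB_eq x u (j:ℕ)]
      ring
    · have hf : sumP N (.inr j) (.inl i) = fun _ => (0:ℝ) := by
        funext y; simp only [sumP, linP, quadP, if_neg hc1, if_neg hc2]; norm_num
      rw [if_neg hc2]
      simp only [hf, pd_sh0, mul_zero]
      simp

lemma contract_rr (i j : Fin N) :
    ∑ s : TodaIdx N, sumP N s u x * pd (sumP N (.inr i) (.inr j)) s x
      = SC (av x) (bv x) (m2 u) (.inr (i:ℕ)) (.inr (j:ℕ)) := by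
  simp only [SC]
  by_cases hc1 : (j:ℕ) = (i:ℕ) + 1
  · have hf : sumP N (.inr i) (.inr j) = fun y => 2 * (av y (i:ℕ) * av y (i:ℕ)) := by
      funext y; simp only [sumP, linP, quadP, if_pos hc1, zero_add]; ring
    rw [if_pos hc1]
    simp only [hf, pd_sh5]
    have e : ∀ s : TodaIdx N, sumP N s u x * (4 * av x (i:ℕ) * asel N s (i:ℕ))
        = (4 * av x (i:ℕ)) * (sumP N s u x * asel N s (i:ℕ)) := fun s => by ring
    rw [Finset.sum_congr rfl (fun s _ => e s), ← Finset.mul_sum,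
      sum_asel (fun s => sumP N s u x)]
    rw [QA_eq x u (i:ℕ)]
  · rw [if_neg hc1]
    by_cases hc2 : (i:ℕ) = (j:ℕ) + 1
    · have hf : sumP N (.inr i) (.inr j) = fun y => -(2 * (av y (j:ℕ) * av y (j:ℕ))) := by
        funext y; simp only [sumP, linP, quadP, if_neg hc1, if_pos hc2, zero_add]; ring
      rw [if_pos hc2]
      simp only [hf, pd_sh6]
      have e : ∀ s : TodaIdx N, sumP N s u x * (-(4 * av x (j:ℕ) * asel N s (j:ℕ)))
          = (-(4 * av x (j:ℕ))) * (sumP N s u x * asel N s (j:ℕ)) := fun s => by ring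
      rw [Finset.sum_congr rfl (fun s _ => e s), ← Finset.mul_sum,
        sum_asel (fun s => sumP N s u x)]
      rw [QA_eq x u (j:ℕ)]
      ring
    · have hf : sumP N (.inr i) (.inr j) = fun _ => (0:ℝ) := by
        funext y; simp only [sumP, linP, quadP, if_neg hc1, if_neg hc2, zero_add]
      rw [if_neg hc2]
      simp only [hf, pd_sh0, mul_zero]
      exact Finset.sum_const_zero

lemma contract (v w : TodaIdx N) :
    ∑ s : TodaIdx N, sumP N s u x * pd (sumP N v w) s x
      = SC (av x) (bv x) (m2 u) (m2 v) (m2 w) := by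
  cases v with
  | inl i => cases w with
    | inl j => exact contract_ll x u i j
    | inr j => exact contract_lr x u i j
  | inr i => cases w with
    | inl j => exact contract_rl x u i j
    | inr j => exact contract_rr x u i j

end ContractLemmas

set_option maxHeartbeats 2000000 in
lemma jacSC (A B : ℕ → ℝ) (u v w : ℕ ⊕ ℕ) :
    SC A B u v w + SC A B v w u + SC A B w u v = 0 := by
  rcases u with p | p <;> rcases v with q | q <;> rcases w with r | r <;>
    simp only [SC, QA, QB] <;>
    split_ifs <;>
    first
      | ring1
      | (exfalso; omega)
      | (subst_vars; ring1)
      | (subst_vars; exfalso; omega)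

theorem linQuadToda_compatible (N : ℕ) (x : TodaIdx N → ℝ) (u v w : TodaIdx N) :
    ∑ s : TodaIdx N, (sumP N s u x * pd (sumP N v w) s x
      + sumP N s v x * pd (sumP N w u) s x
      + sumP N s w x * pd (sumP N u v) s x) = 0 := by
  rw [Finset.sum_add_distrib, Finset.sum_add_distrib, contract x u v w, contract x v w u,
    contract x w u v]
  exact jacSC (av x) (bv x) (m2 u) (m2 v) (m2 w)
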